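/- Suppose a map f : X → Y between uniform spaces generates the uniform structure on Y, has chain lifting, and has strong approximate uniqueness of chain lifts. Then f is approximated by uniform covering maps. -/

import Mathlib

open Filter Set

universe u v

section Chains

variable {X : Type u} {Y : Type v}

/-- `c` is an `E`-chain: consecutive members of the list lie in `E`. -/
def IsEChain (E : Set (X × X)) (c : List X) : Prop :=
  c.Chain' (fun a b => (a, b) ∈ E)

/-- Two chains (necessarily of the same length) are `E`-close. -/
def EClose (E : Set (X × X)) (c d : List X) : Prop :=
  List.Forall₂ (fun a b => (a, b) ∈ E) c d

variable [UniformSpace X] [UniformSpace Y]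

/-- `f` generates the uniform structure on `Y`: it is uniformly continuous,
surjective, and images of entourages are entourages. -/
def GeneratesUS (f : X → Y) : Prop :=
  UniformContinuous f ∧ Function.Surjective f ∧
    ∀ E ∈ uniformity X, Prod.map f f '' E ∈ uniformity Y

/-- `f` has chain lifting. -/
def ChainLifting (f : X → Y) : Prop :=
  ∀ E ∈ uniformity X, ∃ F ∈ uniformity X, ∀ x : X, ∀ c : List Y,
    IsEChain (Prod.map f f '' F) c → c.head? = some (f x) →
      ∃ d : List X, IsEChain E d ∧ d.head? = some x ∧ d.map f = c

/-- `f` has uniqueness of chain lifts. -/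
def UniqueChainLifts (f : X → Y) : Prop :=
  ∀ E ∈ uniformity X, ∃ F ∈ uniformity X, F ⊆ E ∧ ∀ c d : List X,
    IsEChain F c → IsEChain F d → c.head? = d.head? → c.map f = d.map f → c = d

/-- `f` has approximate uniqueness of chain lifts. -/
def ApproxUniqueChainLifts (f : X → Y) : Prop :=
  ∀ E ∈ uniformity X, ∃ F ∈ uniformity X, F ⊆ E ∧ ∀ c d : List X,
    IsEChain F c → IsEChain F d → c.head? = d.head? → c.map f = d.map f → EClose E c d

/-- `f` has strong approximate uniqueness of chain lifts. -/
def StrongApproxUniqueChainLifts (f : X → Y) : Prop :=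
  ∀ E ∈ uniformity X, ∃ F ∈ uniformity X, F ⊆ E ∧ ∀ c d : List X,
    IsEChain F c → IsEChain F d → c.head? = d.head? → c.map f = d.map f → EClose F c d

/-- `f` is a uniform covering map. -/
def IsUCM (f : X → Y) : Prop :=
  GeneratesUS f ∧ ChainLifting f ∧ UniqueChainLifts f

/-- `h` has `F`-bounded fibers. -/
def BoundedFibers {Z : Type*} (F : Set (X × X)) (h : X → Z) : Prop :=
  ∀ a b : X, h a = h b → (a, b) ∈ F

/-- `f` has complete fibers (each fiber, with the subspace uniformity, is complete). -/
def CompleteFibers (f : X → Y) : Prop :=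
  ∀ y : Y, IsComplete (f ⁻¹' {y})

/-- `f` is approximated by uniform covering maps. -/
def ApproxByUCMs (f : X → Y) : Prop :=
  ∀ E ∈ uniformity X, ∃ F ∈ uniformity X, F ⊆ E ∧
    ∃ (Z : Type (max u v)) (_ : UniformSpace Z) (h : X → Z) (g : Z → Y),
      (∀ x, g (h x) = f x) ∧ IsUCM g ∧ BoundedFibers F h

end Chains


lemma isEChain_pair' {X : Type*} {E : Set (X × X)} {x y : X} (hxy : (x, y) ∈ E) :
    IsEChain E [x, y] := by
  simp [IsEChain, List.Chain', hxy]

lemma isEChain_triple' {X : Type*} {E : Set (X × X)} {x y z : X}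
    (h1 : (x, y) ∈ E) (h2 : (y, z) ∈ E) : IsEChain E [x, y, z] := by
  simp [IsEChain, List.Chain', h1, h2]

/-- If a map between uniform spaces generates the uniform structure on the codomain,
has chain lifting, and has strong approximate uniqueness of chain lifts, then it is
approximated by uniform covering maps. -/
theorem approxByUCMs_of_strongApproxUnique
    {X : Type u} {Y : Type v} [UniformSpace X] [UniformSpace Y] (f : X → Y)
    (hgen : GeneratesUS f) (hcl : ChainLifting f)
    (hsau : StrongApproxUniqueChainLifts f) : ApproxByUCMs f := by
  intro E₀ hE₀
  obtain ⟨F', hF'u, hF'E, hSAU⟩ := hsau E₀ hE₀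
  have hF'refl : ∀ x : X, (x, x) ∈ F' := fun x => refl_mem_uniformity hF'u
  set R : X → X → Prop := fun x y => f x = f y ∧ (x, y) ∈ F' with hRdef
  -- symmetry of R
  have hRsymm : ∀ {x y : X}, R x y → R y x := by
    rintro x y ⟨hf, hxy⟩
    have hclose := hSAU [x, y] [x, x] (isEChain_pair' hxy) (isEChain_pair' (hF'refl x)) rfl
      (by simp [hf])
    simp [EClose] at hclose
    exact ⟨hf.symm, hclose.2⟩
  -- transitivity of R
  have hRtrans : ∀ {x y z : X}, R x y → R y z → R x z := by
    rintro x y z ⟨hf1, hxy⟩ ⟨hf2, hyz⟩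
    have hclose := hSAU [x, y, z] [x, x, x] (isEChain_triple' hxy hyz)
      (isEChain_triple' (hF'refl x) (hF'refl x)) rfl (by simp [hf1, hf2])
    simp [EClose] at hclose
    exact hRsymm ⟨(hf1.trans hf2).symm, hclose.2.2⟩
  let s : Setoid X := ⟨R, ⟨fun x => ⟨rfl, hF'refl x⟩, hRsymm, hRtrans⟩⟩
  let Z : Type (max u v) := ULift.{v} (Quotient s)
  let h : X → Z := fun x => ULift.up (Quotient.mk s x)
  let g : Z → Y := fun z => Quotient.lift f (fun a b hab => (hab : f a = f b ∧ (a, b) ∈ F').1) z.down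
  have hgh : ∀ x : X, g (h x) = f x := fun x => rfl
  have hheq : ∀ a b : X, h a = h b ↔ R a b := by
    intro a b
    constructor
    · intro hab
      exact Quotient.exact (congrArg ULift.down hab)
    · intro hab
      exact congrArg ULift.up (Quotient.sound hab)
  have hsurj : Function.Surjective h := by
    rintro ⟨q⟩
    obtain ⟨x, hx⟩ := q.exists_rep
    exact ⟨x, congrArg ULift.up hx⟩
  set m : X × X → Z × Z := Prod.map h h with hmdef
  -- slide lemma
  have slide : ∀ W ∈ uniformity X, ∃ Fw ∈ uniformity X, ∀ x x₁ y₁ : X, R x x₁ →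
      (x₁, y₁) ∈ Fw → (x₁, y₁) ∈ F' →
      ∃ y : X, (x, y) ∈ W ∧ (x, y) ∈ F' ∧ R y y₁ := by
    intro W hW
    obtain ⟨Fw, hFwu, hlift⟩ := hcl (W ∩ F') (inter_mem hW hF'u)
    refine ⟨Fw, hFwu, ?_⟩
    rintro x x₁ y₁ ⟨hfx, hxx₁⟩ hFw hF'p
    have hc : IsEChain (Prod.map f f '' Fw) [f x₁, f y₁] :=
      isEChain_pair' ⟨(x₁, y₁), hFw, rfl⟩
    obtain ⟨d, hd, hdh, hdm⟩ := hlift x [f x₁, f y₁] hc (by simp [hfx])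
    rcases d with _ | ⟨a, _ | ⟨b, t⟩⟩
    · simp at hdm
    · simp at hdm
    · simp at hdm
      obtain ⟨ha, hb, ht⟩ := hdm
      subst ht
      have hax : a = x := by simpa using hdh
      simp [IsEChain, List.Chain'] at hd
      rw [hax] at hd
      have hclose := hSAU [x, x, b] [x, x₁, y₁]
        (isEChain_triple' (hF'refl x) hd.2)
        (isEChain_triple' hxx₁ hF'p) rfl (by simp [hfx, hb])
      simp [EClose] at hclose
      exact ⟨b, hd.1, hd.2, hb, hclose.2.2⟩
  -- the uniform core on Z
  have him_mem : ∀ G ∈ uniformity X, m '' G ∈ Filter.map m (uniformity X) := by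
    intro G hG
    exact Filter.mem_map.mpr (mem_of_superset hG (subset_preimage_image m G))
  let core : UniformSpace.Core Z :=
    { uniformity := Filter.map m (uniformity X)
      refl := by
        refine Filter.le_def.mpr fun S hS => ?_
        rw [Filter.mem_principal]
        rintro ⟨z₁, z₂⟩ hz
        have hz' : z₁ = z₂ := hz
        subst hz'
        obtain ⟨x, hx⟩ := hsurj z₁
        have h1 : (x, x) ∈ m ⁻¹' S := refl_mem_uniformity (α := X) (Filter.mem_map.mp hS)
        have h2 : (h x, h x) ∈ S := h1
        rw [hx] at h2
        exact h2
      symm := by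
        have hcomm : (Prod.swap ∘ m : X × X → Z × Z) = m ∘ Prod.swap := rfl
        rw [Filter.tendsto_map'_iff, hcomm]
        exact Filter.tendsto_map.comp tendsto_swap_uniformity
      comp := by
        refine Filter.le_def.mpr fun S hS => ?_
        refine (Filter.mem_lift'_sets fun _ _ hst => SetRel.comp_subset_comp hst hst).mpr ?_
        have hGu : m ⁻¹' S ∈ uniformity X := Filter.mem_map.mp hS
        obtain ⟨G₂, hG₂u, hG₂⟩ := comp_mem_uniformity_sets hGu
        obtain ⟨F₂, hF₂u, hslide⟩ := slide G₂ hG₂u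
        have hG'u : G₂ ∩ (F₂ ∩ F') ∈ uniformity X := inter_mem hG₂u (inter_mem hF₂u hF'u)
        refine ⟨m '' (G₂ ∩ (F₂ ∩ F')), him_mem _ hG'u, ?_⟩
        rintro ⟨p, q⟩ ⟨r, ⟨⟨a, b₁⟩, hab, hab'⟩, ⟨⟨b₂, c⟩, hbc, hbc'⟩⟩
        obtain ⟨hap, hbr⟩ := Prod.mk.injEq .. ▸ hab'
        obtain ⟨hbr2, hcq⟩ := Prod.mk.injEq .. ▸ hbc'
        have hb₁b₂ : R b₁ b₂ := (hheq b₁ b₂).mp (hbr.trans hbr2.symm)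
        obtain ⟨c', hc'G₂, _, hc'R⟩ := hslide b₁ b₂ c hb₁b₂ hbc.2.1 hbc.2.2
        have hac' : (a, c') ∈ m ⁻¹' S := hG₂ ⟨b₁, hab.1, hc'G₂⟩
        have hq : h c' = q := ((hheq c' c).mpr hc'R).trans hcq
        have : (h a, h c') ∈ S := hac'
        rwa [hap, hq] at this
    }
  letI uZ : UniformSpace Z := UniformSpace.ofCore core
  have huZ : uniformity Z = Filter.map m (uniformity X) := rfl
  have hmemZ : ∀ S : Set (Z × Z), S ∈ uniformity Z ↔ m ⁻¹' S ∈ uniformity X := by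
    intro S; rw [huZ, Filter.mem_map]
  have hDsub : ∀ S ∈ uniformity Z, m '' (m ⁻¹' S) ⊆ S := fun S _ => image_preimage_subset m S
  -- components of IsUCM g
  have hggen : GeneratesUS g := by
    refine ⟨?_, ?_, ?_⟩
    · show Filter.Tendsto (fun p : Z × Z => (g p.1, g p.2)) (uniformity Z) (uniformity Y)
      rw [huZ, Filter.tendsto_map'_iff]
      exact hgen.1
    · intro y
      obtain ⟨x, hx⟩ := hgen.2.1 y
      exact ⟨h x, hx⟩
    · intro S hS
      have hGu : m ⁻¹' S ∈ uniformity X := (hmemZ S).mp hS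
      refine mem_of_superset (hgen.2.2 _ hGu) ?_
      rintro ⟨y₁, y₂⟩ ⟨⟨a, b⟩, hab, habm⟩
      exact ⟨(h a, h b), hab, habm⟩
  have hgcl : ChainLifting g := by
    intro S hS
    have hGu : m ⁻¹' S ∈ uniformity X := (hmemZ S).mp hS
    obtain ⟨Ff, hFfu, hflift⟩ := hcl (m ⁻¹' S) hGu
    refine ⟨m '' Ff, (hmemZ _).mpr (mem_of_superset hFfu (subset_preimage_image m Ff)), ?_⟩
    intro z c hc hhead
    obtain ⟨x, hx⟩ := hsurj z
    have himg : Prod.map g g '' (m '' Ff) = Prod.map f f '' Ff := by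
      rw [Set.image_image]
      rfl
    rw [himg] at hc
    obtain ⟨d, hd, hdh, hdm⟩ := hflift x c hc (by rw [← hx] at hhead; exact hhead)
    refine ⟨d.map h, ?_, ?_, ?_⟩
    · exact List.isChain_map_of_isChain h (fun a b hab => hab) hd
    · rw [List.head?_map, hdh]
      simp [hx]
    · rw [List.map_map]
      exact hdm
  have hguniq : UniqueChainLifts g := by
    intro S hS
    have hGu : m ⁻¹' S ∈ uniformity X := (hmemZ S).mp hS
    obtain ⟨F₂, hF₂u, hslide⟩ := slide F' hF'u
    set G' : Set (X × X) := (m ⁻¹' S) ∩ (F₂ ∩ F') with hG'def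
    have hG'u : G' ∈ uniformity X := inter_mem hGu (inter_mem hF₂u hF'u)
    have hTmem : m '' G' ∈ uniformity Z :=
      (hmemZ _).mpr (mem_of_superset hG'u (subset_preimage_image m G'))
    have hTsub : m '' G' ⊆ S :=
      (Set.image_mono (f := m) (inter_subset_left)).trans (image_preimage_subset m S)
    refine ⟨m '' G', hTmem, hTsub, ?_⟩
    -- straighten a D(G')-chain
    have straighten : ∀ (p : List Z) (x : X), IsEChain (m '' G') p → p.head? = some (h x) →
        ∃ cc : List X, IsEChain F' cc ∧ cc.head? = some x ∧ cc.map h = p := by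
      intro p
      induction p with
      | nil => intro x _ hhx; simp at hhx
      | cons p₀ ps ih =>
        intro x hch hhx
        simp at hhx
        cases ps with
        | nil =>
          exact ⟨[x], by simp [IsEChain, List.Chain'], rfl, by simp [hhx]⟩
        | cons p₁ ps' =>
          have hpair : (p₀, p₁) ∈ m '' G' := (List.isChain_cons_cons.mp hch).1
          have htail : IsEChain (m '' G') (p₁ :: ps') := (List.isChain_cons_cons.mp hch).2
          obtain ⟨⟨a, b⟩, habG, habm⟩ := hpair
          obtain ⟨hap, hbp⟩ := Prod.mk.injEq .. ▸ habm
          have hxa : R x a := (hheq x a).mp (hhx.symm.trans hap.symm)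
          obtain ⟨y, _, hxyF', hyb⟩ := hslide x a b hxa habG.2.1 habG.2.2
          have hhy : h y = p₁ := ((hheq y b).mpr hyb).trans hbp
          obtain ⟨cc, hcc, hcch, hccm⟩ := ih y htail (by rw [hhy]; rfl)
          refine ⟨x :: cc, ?_, rfl, ?_⟩
          · rw [IsEChain, List.Chain', List.isChain_cons]
            refine ⟨fun z hz => ?_, hcc⟩
            rw [hcch] at hz
            obtain rfl : y = z := by simpa using hz
            exact hxyF'
          · simp only [List.map_cons, hccm, hhx]
      -- key: from EClose and equal f-images, equal h-images
    have key : ∀ (u v : List X), List.Forall₂ (fun a b => (a, b) ∈ F') u v →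
        u.map f = v.map f → u.map h = v.map h := by
      intro u v huv
      induction huv with
      | nil => intro; rfl
      | @cons a b u' v' hab _ ih =>
        intro hm
        simp only [List.map_cons, List.cons.injEq] at hm ⊢
        exact ⟨(hheq a b).mpr ⟨hm.1, hab⟩, ih hm.2⟩
    intro c d hc hd hhead hmap
    cases c with
    | nil =>
      cases d with
      | nil => rfl
      | cons d₀ ds => simp at hmap
    | cons c₀ cs =>
      cases d with
      | nil => simp at hmap
      | cons d₀ ds =>
        have hc₀d₀ : c₀ = d₀ := by simpa using hhead
        subst hc₀d₀
        obtain ⟨x, hx⟩ := hsurj c₀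
        obtain ⟨cc, hcc, hcch, hccm⟩ := straighten (c₀ :: cs) x hc (by rw [hx]; rfl)
        obtain ⟨dd, hdd, hddh, hddm⟩ := straighten (c₀ :: ds) x hd (by rw [hx]; rfl)
        have hfmap : cc.map f = dd.map f := by
          have h1 : (cc.map h).map g = (dd.map h).map g := by rw [hccm, hddm]; exact hmap
          rwa [List.map_map, List.map_map] at h1
        have hclose := hSAU cc dd hcc hdd (hcch.trans hddh.symm) hfmap
        have hhmap : cc.map h = dd.map h := key cc dd hclose hfmap
        rw [← hccm, ← hddm, hhmap]
  exact ⟨F', hF'u, hF'E, Z, uZ, h, g, hgh, ⟨hggen, hgcl, hguniq⟩,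
    fun a b hab => ((hheq a b).mp hab).2⟩
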